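/- arXiv:1701.04196 — 2 statements merged into one kernel-verified Lean document; each statement's English description precedes it below -/
import Mathlib

section
/- Let X = {−∞} ∪ ℤ ∪ {∞} be the two-point compactification of ℤ, formally the linearly ordered set obtained by adjoining a bottom element −∞ and a top element ∞ to ℤ, equipped with the order topology (it is a compact Hausdorff space in which each n ∈ ℤ is isolated). The map sending f ∈ B_ℤ to the continuous function f̃ ∈ C(X, ℂ) defined by f̃(k) = f(k) for k ∈ ℤ, f̃(∞) = lim_{k→∞} f(k), and f̃(−∞) = 0, is an isometric star-algebra isomorphism of B_ℤ onto the maximal ideal I = {g ∈ C(X, ℂ) : g(−∞) = 0} of C(X, ℂ). -/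
open BoundedContinuousFunction Filter Topology

/-- The indicator function of `{k : ℤ | n ≤ k}` as a bounded (continuous) function `ℤ → ℂ`,
an element of `ℓ∞(ℤ, ℂ)`. -/
noncomputable def indBZ (n : ℤ) : ℤ →ᵇ ℂ :=
  BoundedContinuousFunction.ofNormedAddCommGroup
    (fun k => if n ≤ k then (1:ℂ) else 0)
    (continuous_of_discreteTopology) 1
    (fun k => by by_cases h : n ≤ k <;> simp [h])

lemma indBZ_apply (n k : ℤ) : indBZ n k = if n ≤ k then (1:ℂ) else 0 := rfl

lemma indBZ_mul (n m : ℤ) : indBZ n * indBZ m = indBZ (max n m) := by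
  ext k
  simp only [BoundedContinuousFunction.coe_mul, Pi.mul_apply, indBZ_apply]
  by_cases h1 : n ≤ k <;> by_cases h2 : m ≤ k <;> simp [h1, h2, max_le_iff]

lemma star_indBZ (n : ℤ) : star (indBZ n) = indBZ n := by
  ext k
  simp only [BoundedContinuousFunction.star_apply, indBZ_apply]
  by_cases h : n ≤ k <;> simp [h]

/-- The linear span of `{1_n : n ∈ ℤ}` in `ℓ∞(ℤ, ℂ)`. -/
noncomputable def BZspan : Submodule ℂ (ℤ →ᵇ ℂ) := Submodule.span ℂ (Set.range indBZ)

lemma BZspan_mul_mem {f g : ℤ →ᵇ ℂ} (hf : f ∈ BZspan) (hg : g ∈ BZspan) : f * g ∈ BZspan := by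
  have h : BZspan * BZspan ≤ BZspan := by
    rw [BZspan, Submodule.span_mul_span]
    refine Submodule.span_le.mpr ?_
    rintro x ⟨a, ⟨n, rfl⟩, b, ⟨m, rfl⟩, rfl⟩
    exact Submodule.subset_span ⟨max n m, (indBZ_mul n m).symm⟩
  exact h (Submodule.mul_mem_mul hf hg)

lemma BZspan_star_mem {f : ℤ →ᵇ ℂ} (hf : f ∈ BZspan) : star f ∈ BZspan := by
  induction hf using Submodule.span_induction with
  | mem x hx => obtain ⟨n, rfl⟩ := hx; rw [star_indBZ]; exact Submodule.subset_span ⟨n, rfl⟩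
  | zero => simp only [star_zero]; exact Submodule.zero_mem _
  | add x y _ _ hx hy => rw [star_add]; exact Submodule.add_mem _ hx hy
  | smul c x _ hx => rw [star_smul]; exact Submodule.smul_mem _ _ hx

/-- `B_ℤ`: the closed linear span of `{1_n : n ∈ ℤ}` in `ℓ∞(ℤ, ℂ)`, which is a
(non-unital) C*-subalgebra of `ℓ∞(ℤ, ℂ)`. -/
noncomputable def BZalg : NonUnitalStarSubalgebra ℂ (ℤ →ᵇ ℂ) :=
  NonUnitalStarSubalgebra.topologicalClosure
    { BZspan with
      mul_mem' := BZspan_mul_mem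
      star_mem' := BZspan_star_mem }

/-- Membership in `B_ℤ` is exactly membership in the closed linear span of the `1_n`. -/
lemma BZalg_mem_iff (f : ℤ →ᵇ ℂ) :
    f ∈ BZalg ↔ f ∈ (Submodule.span ℂ (Set.range indBZ)).topologicalClosure := Iff.rfl

/-- The two-point compactification `X = {−∞} ∪ ℤ ∪ {∞}` of `ℤ`: the linearly ordered set
obtained by adjoining a bottom element `−∞` and a top element `∞` to `ℤ`. -/
abbrev Xc := WithTop (WithBot ℤ)

/-- `X` carries the order topology (a compact Hausdorff topology in which every `n ∈ ℤ` is
isolated). -/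
noncomputable instance : TopologicalSpace Xc := Preorder.topology Xc

instance : OrderTopology Xc := ⟨rfl⟩


/-! ### Auxiliary material for the main theorem -/

namespace BZaux

open Set

lemma myTendstoTop : Tendsto (fun k : ℤ => ((k : WithBot ℤ) : Xc)) atTop (𝓝 ⊤) := by
  rw [nhds_top_basis.tendsto_right_iff]
  intro a ha
  induction a using WithTop.recTopCoe with
  | top => exact absurd ha (lt_irrefl _)
  | coe b =>
    induction b using WithBot.recBotCoe with
    | bot =>
      refine Eventually.of_forall fun k => ?_
      simp only [Set.mem_Ioi, ← WithTop.coe_bot, WithTop.coe_lt_coe]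
      exact WithBot.bot_lt_coe k
    | coe m =>
      filter_upwards [eventually_ge_atTop (m+1)] with k hk
      simp only [Set.mem_Ioi, WithTop.coe_lt_coe, WithBot.coe_lt_coe]
      omega

lemma myTendstoBot : Tendsto (fun k : ℤ => ((k : WithBot ℤ) : Xc)) atBot (𝓝 ((⊥:WithBot ℤ):Xc)) := by
  have h : ((⊥:WithBot ℤ):Xc) = (⊥:Xc) := rfl
  rw [h, nhds_bot_basis.tendsto_right_iff]
  intro a ha
  induction a using WithTop.recTopCoe with
  | top =>
    refine Eventually.of_forall fun k => ?_
    simp [Set.mem_Iio]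
  | coe b =>
    induction b using WithBot.recBotCoe with
    | bot => exact absurd ha (lt_irrefl _)
    | coe m =>
      filter_upwards [eventually_le_atBot (m-1)] with k hk
      simp only [Set.mem_Iio, WithTop.coe_lt_coe, WithBot.coe_lt_coe]
      omega

lemma myDense : Dense (Set.range (fun k : ℤ => ((k : WithBot ℤ) : Xc))) := by
  intro x
  induction x using WithTop.recTopCoe with
  | top => exact mem_closure_of_tendsto myTendstoTop (Eventually.of_forall fun k => Set.mem_range_self k)
  | coe b =>
    induction b using WithBot.recBotCoe with
    | bot => exact mem_closure_of_tendsto myTendstoBot (Eventually.of_forall fun k => Set.mem_range_self k)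
    | coe m => exact subset_closure ⟨m, rfl⟩

lemma myIsOpenIci (n : ℤ) : IsOpen (Set.Ici (((n:WithBot ℤ)):Xc)) := by
  have h : Set.Ici (((n:WithBot ℤ)):Xc) = Set.Ioi (((n-1:ℤ):WithBot ℤ):Xc) := by
    ext x
    induction x using WithTop.recTopCoe with
    | top => simp
    | coe b =>
      induction b using WithBot.recBotCoe with
      | bot => simp
      | coe m =>
        simp only [Set.mem_Ici, Set.mem_Ioi, WithTop.coe_le_coe, WithTop.coe_lt_coe,
          WithBot.coe_le_coe, WithBot.coe_lt_coe]
        omega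
  rw [h]; exact isOpen_Ioi

/-- The inclusion `ℤ → Xc` as a continuous map. -/
noncomputable def iZ : C(ℤ, Xc) :=
  ⟨fun k => ((k : WithBot ℤ) : Xc), continuous_of_discreteTopology⟩

/-- Restriction to `ℤ`, as a star-algebra homomorphism `C(Xc, ℂ) → ℓ∞(ℤ, ℂ)`. -/
noncomputable def rho : C(Xc, ℂ) →⋆ₙₐ[ℂ] (ℤ →ᵇ ℂ) where
  toFun g := (BoundedContinuousFunction.mkOfCompact g).compContinuous iZ
  map_smul' c g := by ext k; simp
  map_zero' := by ext k; simp
  map_add' g h := by ext k; simp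
  map_mul' g h := by ext k; simp
  map_star' g := by ext k; simp

lemma rho_apply (g : C(Xc, ℂ)) (k : ℤ) : rho g k = g ((k : WithBot ℤ) : Xc) := rfl

lemma norm_rho (g : C(Xc, ℂ)) : ‖rho g‖ = ‖g‖ := by
  refine le_antisymm ?_ ?_
  · refine BoundedContinuousFunction.norm_le (norm_nonneg g) |>.mpr fun k => ?_
    rw [rho_apply]
    exact g.norm_coe_le_norm _
  · refine (g.norm_le (norm_nonneg (rho g))).mpr fun x => ?_
    have hcl : IsClosed {x : Xc | ‖g x‖ ≤ ‖rho g‖} :=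
      isClosed_le (g.continuous.norm) continuous_const
    have hsub : Set.range (fun k : ℤ => ((k : WithBot ℤ) : Xc)) ⊆ {x : Xc | ‖g x‖ ≤ ‖rho g‖} := by
      rintro _ ⟨k, rfl⟩
      exact (rho g).norm_coe_le_norm k
    have := hcl.closure_subset_iff.mpr hsub
    exact this (myDense x)

lemma rho_isometry : Isometry (rho : C(Xc, ℂ) → (ℤ →ᵇ ℂ)) :=
  AddMonoidHomClass.isometry_of_norm _ norm_rho

lemma rho_injective : Function.Injective (rho : C(Xc, ℂ) → (ℤ →ᵇ ℂ)) :=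
  rho_isometry.injective

/-- The continuous extension of `indBZ n` to `Xc`: the indicator of `Ici n`. -/
noncomputable def indX (n : ℤ) : C(Xc, ℂ) :=
  ⟨fun x => if ((n : WithBot ℤ) : Xc) ≤ x then 1 else 0, by
    have hclopen : IsClopen {x : Xc | ((n : WithBot ℤ) : Xc) ≤ x} :=
      ⟨isClosed_Ici, myIsOpenIci n⟩
    refine Continuous.if ?_ continuous_const continuous_const
    intro a ha
    rw [hclopen.frontier_eq] at ha
    exact absurd ha (Set.notMem_empty a)⟩

lemma indX_apply (n : ℤ) (x : Xc) : indX n x = if ((n : WithBot ℤ) : Xc) ≤ x then 1 else 0 := rfl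

lemma rho_indX (n : ℤ) : rho (indX n) = indBZ n := by
  ext k
  rw [rho_apply, indX_apply, indBZ_apply]
  simp [WithTop.coe_le_coe, WithBot.coe_le_coe]

lemma indX_bot (n : ℤ) : indX n ((⊥:WithBot ℤ):Xc) = 0 := by
  rw [indX_apply, if_neg]
  simp [WithTop.coe_le_coe]

end BZaux

namespace BZaux

/-- The ideal of functions vanishing at `⊥`, as a submodule. -/
noncomputable def Vbot : Submodule ℂ C(Xc, ℂ) :=
  LinearMap.ker ((ContinuousMap.evalCLM ℂ (((⊥:WithBot ℤ)):Xc)).toLinearMap)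

lemma mem_Vbot (g : C(Xc, ℂ)) : g ∈ Vbot ↔ g ((⊥:WithBot ℤ):Xc) = 0 := Iff.rfl

lemma isClosed_Vbot : IsClosed (Vbot : Set C(Xc, ℂ)) :=
  isClosed_eq (continuous_eval_const _) continuous_const

set_option synthInstance.maxHeartbeats 1000000 in
lemma exists_ext (f : ℤ →ᵇ ℂ) (hf : f ∈ BZalg) :
    ∃ g : C(Xc, ℂ), g ((⊥:WithBot ℤ):Xc) = 0 ∧ rho g = f := by
  have hS : IsClosed ((fun g => rho g) '' (Vbot : Set C(Xc, ℂ))) := by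
    have hcomp : IsComplete ((fun g => rho g) '' (Vbot : Set C(Xc, ℂ))) :=
      (isComplete_image_iff rho_isometry.isUniformInducing).mpr isClosed_Vbot.isComplete
    exact hcomp.isClosed
  have hspan : (BZspan : Set (ℤ →ᵇ ℂ)) ⊆ (fun g => rho g) '' (Vbot : Set C(Xc, ℂ)) := by
    have : (fun g => rho g) '' (Vbot : Set C(Xc, ℂ)) =
        ((Vbot.map ((rho : C(Xc, ℂ) →⋆ₙₐ[ℂ] (ℤ →ᵇ ℂ)) : C(Xc, ℂ) →ₗ[ℂ] (ℤ →ᵇ ℂ)) : Submodule ℂ (ℤ →ᵇ ℂ)) : Set (ℤ →ᵇ ℂ)) := rfl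
    rw [this]
    refine Submodule.span_le.mpr ?_
    rintro _ ⟨n, rfl⟩
    exact ⟨indX n, indX_bot n, rho_indX n⟩
  have hmem : f ∈ closure (BZspan : Set (ℤ →ᵇ ℂ)) := hf
  have := (hS.closure_subset_iff.mpr hspan) hmem
  obtain ⟨g, hg, rfl⟩ := this
  exact ⟨g, hg, rfl⟩

end BZaux

namespace BZaux

lemma rho_mem_BZalg (g : C(Xc, ℂ)) (hg : g ((⊥:WithBot ℤ):Xc) = 0) : rho g ∈ BZalg := by
  rw [BZalg_mem_iff]
  have hmem : rho g ∈ closure (BZspan : Set (ℤ →ᵇ ℂ)) := by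
    rw [Metric.mem_closure_iff]
    intro ε hε
    set δ := ε / 2 with hδdef
    have hδ : 0 < δ := by positivity
    -- behaviour at -∞
    have hbot : Tendsto (fun k : ℤ => g ((k : WithBot ℤ) : Xc)) atBot (𝓝 0) := by
      have := (g.continuous.tendsto (((⊥:WithBot ℤ)):Xc)).comp myTendstoBot
      rwa [hg] at this
    have htop : Tendsto (fun k : ℤ => g ((k : WithBot ℤ) : Xc)) atTop (𝓝 (g (⊤ : Xc))) :=
      (g.continuous.tendsto (⊤ : Xc)).comp myTendstoTop
    obtain ⟨N, hN⟩ := eventually_atBot.mp (hbot (Metric.ball_mem_nhds 0 hδ))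
    obtain ⟨M₀, hM₀⟩ := eventually_atTop.mp (htop (Metric.ball_mem_nhds _ hδ))
    set M := max (N + 1) M₀ with hMdef
    -- the approximating function
    set h : ℤ →ᵇ ℂ := g (⊤ : Xc) • indBZ M +
        ∑ k ∈ Finset.Icc N (M - 1), g ((k : WithBot ℤ) : Xc) • (indBZ k - indBZ (k + 1)) with hhdef
    have hmemspan : h ∈ BZspan := by
      refine Submodule.add_mem _ (Submodule.smul_mem _ _ (Submodule.subset_span ⟨M, rfl⟩)) ?_
      refine Submodule.sum_mem _ fun k _ => Submodule.smul_mem _ _ ?_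
      exact Submodule.sub_mem _ (Submodule.subset_span ⟨k, rfl⟩) (Submodule.subset_span ⟨k + 1, rfl⟩)
    refine ⟨h, hmemspan, ?_⟩
    have hb : ∀ j : ℤ, ‖rho g j - h j‖ ≤ δ := by
      intro j
      have hsum : (∑ k ∈ Finset.Icc N (M - 1), g ((k : WithBot ℤ) : Xc) • (indBZ k - indBZ (k + 1))) j
          = if j ∈ Finset.Icc N (M - 1) then g ((j : WithBot ℤ) : Xc) else 0 := by
        rw [← Finset.sum_ite_eq' (Finset.Icc N (M-1)) j (fun k => g ((k : WithBot ℤ) : Xc))]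
        rw [BoundedContinuousFunction.coe_sum, Finset.sum_apply]
        refine Finset.sum_congr rfl fun k _ => ?_
        simp only [BoundedContinuousFunction.coe_smul, Pi.smul_apply,
          BoundedContinuousFunction.coe_sub, Pi.sub_apply, indBZ_apply, smul_eq_mul]
        by_cases hkj : k = j
        · subst hkj
          simp
        · rcases lt_or_gt_of_ne hkj with hlt | hgt
          · rw [if_pos (by omega), if_pos (by omega), if_neg hkj]; ring
          · rw [if_neg (by omega), if_neg (by omega), if_neg hkj]; ring
      have hh : h j = g (⊤ : Xc) * (if M ≤ j then 1 else 0) +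
          (if j ∈ Finset.Icc N (M - 1) then g ((j : WithBot ℤ) : Xc) else 0) := by
        rw [hhdef]
        simp only [BoundedContinuousFunction.coe_add, Pi.add_apply,
          BoundedContinuousFunction.coe_smul, Pi.smul_apply, indBZ_apply, smul_eq_mul]
        rw [hsum]
      rw [rho_apply, hh]
      rcases lt_or_ge j N with hjN | hjN
      · rw [if_neg (by omega), if_neg (show ¬ j ∈ Finset.Icc N (M - 1) by
          simp only [Finset.mem_Icc]; omega)]
        have hb := hN j (by omega : j ≤ N)
        rw [Metric.mem_ball, dist_eq_norm] at hb
        simpa using le_of_lt hb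
      · rcases lt_or_ge j M with hjM | hjM
        · rw [if_neg (by omega), if_pos (show j ∈ Finset.Icc N (M - 1) by
            simp only [Finset.mem_Icc]; omega)]
          simpa using hδ.le
        · rw [if_pos hjM, if_neg (show ¬ j ∈ Finset.Icc N (M - 1) by
            simp only [Finset.mem_Icc]; omega)]
          have := hM₀ j (le_trans (le_max_right _ _) hjM)
          rw [Metric.mem_ball, dist_eq_norm] at this
          simpa using le_of_lt this
    have : dist (rho g) h ≤ δ := by
      rw [dist_eq_norm]
      refine (BoundedContinuousFunction.norm_le hδ.le).mpr fun j => ?_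
      simpa using hb j
    calc dist (rho g) h ≤ δ := this
      _ < ε := by rw [hδdef]; linarith
  exact hmem

end BZaux

namespace BZaux

noncomputable def Phi0 (f : ↥BZalg) : C(Xc, ℂ) := (exists_ext (f : ℤ →ᵇ ℂ) f.2).choose

lemma Phi0_bot (f : ↥BZalg) : Phi0 f ((⊥:WithBot ℤ):Xc) = 0 :=
  (exists_ext (f : ℤ →ᵇ ℂ) f.2).choose_spec.1

lemma rho_Phi0 (f : ↥BZalg) : rho (Phi0 f) = (f : ℤ →ᵇ ℂ) :=
  (exists_ext (f : ℤ →ᵇ ℂ) f.2).choose_spec.2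

lemma Phi0_smul (c : ℂ) (f : ↥BZalg) : Phi0 (c • f) = c • Phi0 f :=
  rho_injective (by rw [rho_Phi0, map_smul, rho_Phi0]; simp)

lemma Phi0_zero : Phi0 0 = 0 :=
  rho_injective (by rw [rho_Phi0, map_zero]; simp)

lemma Phi0_add (f f' : ↥BZalg) : Phi0 (f + f') = Phi0 f + Phi0 f' :=
  rho_injective (by rw [rho_Phi0, map_add, rho_Phi0, rho_Phi0]; simp)

lemma Phi0_mul (f f' : ↥BZalg) : Phi0 (f * f') = Phi0 f * Phi0 f' :=
  rho_injective (by rw [rho_Phi0, map_mul, rho_Phi0, rho_Phi0]; simp)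

lemma Phi0_star (f : ↥BZalg) : Phi0 (star f) = star (Phi0 f) :=
  rho_injective (by rw [rho_Phi0, map_star, rho_Phi0]; simp)

end BZaux

namespace BZaux

noncomputable def Phi : ↥BZalg →⋆ₙₐ[ℂ] C(Xc, ℂ) :=
  { toFun := Phi0
    map_smul' := Phi0_smul
    map_zero' := Phi0_zero
    map_add' := Phi0_add
    map_mul' := Phi0_mul
    map_star' := Phi0_star }

lemma Phi_apply (f : ↥BZalg) : Phi f = Phi0 f := rfl

end BZaux

/-- The map `f ↦ f̃`, where `f̃(k) = f(k)` for `k ∈ ℤ`, `f̃(∞) = lim_{k→∞} f(k)` and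
`f̃(−∞) = 0`, is an isometric star-algebra isomorphism of `B_ℤ` onto the maximal ideal
`I = {g ∈ C(X, ℂ) : g(−∞) = 0}` of `C(X, ℂ)`. -/
theorem BZ_iso_ideal_of_twoPointCompactification :
    ∃ Φ : ↥BZalg →⋆ₙₐ[ℂ] C(Xc, ℂ),
      (∀ (f : ↥BZalg) (k : ℤ), Φ f ((k : WithBot ℤ) : Xc) = (f : ℤ →ᵇ ℂ) k) ∧
      (∀ f : ↥BZalg,
        Tendsto (fun k : ℤ => (f : ℤ →ᵇ ℂ) k) atTop (𝓝 (Φ f (⊤ : Xc)))) ∧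
      (∀ f : ↥BZalg, Φ f ((⊥ : WithBot ℤ) : Xc) = 0) ∧
      (∀ f : ↥BZalg, ‖Φ f‖ = ‖(f : ℤ →ᵇ ℂ)‖) ∧
      Function.Injective Φ ∧
      (∀ f : ↥BZalg, Φ (star f) = star (Φ f)) ∧
      Set.range Φ = {g : C(Xc, ℂ) | g ((⊥ : WithBot ℤ) : Xc) = 0} ∧
      ∃ I : Ideal C(Xc, ℂ), (I : Set C(Xc, ℂ)) = {g : C(Xc, ℂ) | g ((⊥ : WithBot ℤ) : Xc) = 0} ∧
        I.IsMaximal := by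
    classical
  refine ⟨BZaux.Phi, ?_, ?_, ?_, ?_, ?_, ?_, ?_, ?_⟩
  · intro f k
    have := congrArg (fun u : ℤ →ᵇ ℂ => u k) (BZaux.rho_Phi0 f)
    simpa [BZaux.rho_apply, BZaux.Phi_apply] using this
  · intro f
    have h1 : Tendsto (fun k : ℤ => BZaux.Phi f ((k : WithBot ℤ) : Xc)) atTop
        (𝓝 (BZaux.Phi f (⊤ : Xc))) :=
      ((BZaux.Phi f).continuous.tendsto (⊤ : Xc)).comp BZaux.myTendstoTop
    refine h1.congr fun k => ?_
    have := congrArg (fun u : ℤ →ᵇ ℂ => u k) (BZaux.rho_Phi0 f)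
    simpa [BZaux.rho_apply, BZaux.Phi_apply] using this
  · intro f; exact BZaux.Phi0_bot f
  · intro f
    rw [BZaux.Phi_apply, ← BZaux.norm_rho, BZaux.rho_Phi0]
  · intro f f' hff
    have : BZaux.rho (BZaux.Phi0 f) = BZaux.rho (BZaux.Phi0 f') := by
      rw [BZaux.Phi_apply] at hff; rw [hff, BZaux.Phi_apply]
    rw [BZaux.rho_Phi0, BZaux.rho_Phi0] at this
    exact Subtype.ext this
  · intro f; exact map_star BZaux.Phi f
  · ext g
    constructor
    · rintro ⟨f, rfl⟩
      exact BZaux.Phi0_bot f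
    · intro hgmem
      refine ⟨⟨BZaux.rho g, BZaux.rho_mem_BZalg g hgmem⟩, ?_⟩
      refine BZaux.rho_injective ?_
      rw [BZaux.Phi_apply, BZaux.rho_Phi0]
  · set ev : C(Xc, ℂ) →+* ℂ :=
      { toFun := fun g => g ((⊥:WithBot ℤ):Xc)
        map_one' := rfl
        map_mul' := fun _ _ => rfl
        map_zero' := rfl
        map_add' := fun _ _ => rfl } with hev
    have hsurj : Function.Surjective ev := fun c => ⟨ContinuousMap.const _ c, rfl⟩
    refine ⟨RingHom.ker ev, ?_, RingHom.ker_isMaximal_of_surjective ev hsurj⟩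
    ext g
    simp [RingHom.mem_ker, hev]
end

section
/- Suppose Y is Hausdorff, and let Q denote the quotient of (Z∞ × Y) × 𝕋 by the Williams relation, with ι : Y → Q, φ ↦ [((0, φ), 1)], and ĵ : R → Q, [(φ, z)] ↦ [((∞, φ), z)], where R is the quotient of Y × 𝕋 by the Williams relation for the σ-action on Y. Then every open subset S of Q can be written as S = ι(U) ∪ ĵ(W) where U is an open subset of Y, W is an open subset of R, and U is nonempty whenever W is nonempty. -/
open Filter Topology

/-- The order topology on `Z∞ = ℤ ∪ {∞}` (formally `WithTop ℤ`): every `n ∈ ℤ` is isolated,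
and the sets `J_n = {k : ℤ | n ≤ k} ∪ {∞}` form a neighborhood basis at `∞`. -/
noncomputable instance : TopologicalSpace (WithTop ℤ) := Preorder.topology (WithTop ℤ)

instance : OrderTopology (WithTop ℤ) := ⟨rfl⟩

/-- The integer power `σⁿ` (`n : ℤ`) of a homeomorphism `σ : Y ≃ₜ Y`, as a function. -/
def sigmaPow {Y : Type*} [TopologicalSpace Y] (σ : Y ≃ₜ Y) (n : ℤ) : Y → Y :=
  fun y => (σ.toEquiv ^ n) y

/-- The action of `ℤ` on `Z∞ × Y`: `n·(m, y) = (m + n, y)` for `m ∈ ℤ`, and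
`n·(∞, y) = (∞, σⁿ(y))`. -/
def actZ {Y : Type*} [TopologicalSpace Y] (σ : Y ≃ₜ Y) (n : ℤ) (p : WithTop ℤ × Y) :
    WithTop ℤ × Y :=
  (p.1.map (· + n), if p.1 = ⊤ then sigmaPow σ n p.2 else p.2)

/-- The Williams relation on `X × 𝕋` associated to an action `act` of `ℤ` on a topological
space `X`: `(x, z) ∼ (y, w)` iff the closures of the `ℤ`-orbits of `x` and `y` coincide and
`zⁿ = wⁿ` for all `n` in the stability group of `x`. -/
def williams {X : Type*} [TopologicalSpace X] (act : ℤ → X → X)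
    (p q : X × Circle) : Prop :=
  closure (Set.range fun n : ℤ => act n p.1) = closure (Set.range fun n : ℤ => act n q.1) ∧
  ∀ n : ℤ, act n p.1 = p.1 → p.2 ^ n = q.2 ^ n

/-- The map `ι : Y → Q` into the quotient `Q` of `(Z∞ × Y) × 𝕋` by the Williams relation,
sending `φ` to the class of `((0, φ), 1)`. -/
noncomputable def iotaQ {Y : Type*} [TopologicalSpace Y] (σ : Y ≃ₜ Y) :
    Y → Quot (williams (actZ σ)) :=
  fun φ => Quot.mk _ ((((0 : ℤ) : WithTop ℤ), φ), (1 : Circle))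

lemma actZ_coe {Y : Type*} [TopologicalSpace Y] (σ : Y ≃ₜ Y) (n m : ℤ) (φ : Y) :
    actZ σ n ((↑m : WithTop ℤ), φ) = ((↑(m + n) : WithTop ℤ), φ) := by
  simp [actZ, WithTop.map_coe]

lemma finite_class {Y : Type*} [TopologicalSpace Y] (σ : Y ≃ₜ Y) (m : ℤ) (φ : Y)
    (z : Circle) :
    Quot.mk (williams (actZ σ)) (((↑m : WithTop ℤ), φ), z) = iotaQ σ φ := by
  apply Quot.sound
  constructor
  · have hr : (Set.range fun n : ℤ => actZ σ n ((↑m : WithTop ℤ), φ))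
        = Set.range fun n : ℤ => actZ σ n ((↑(0 : ℤ) : WithTop ℤ), φ) := by
      ext p
      simp only [Set.mem_range, actZ_coe]
      constructor
      · rintro ⟨n, rfl⟩; exact ⟨m + n, by rw [zero_add]⟩
      · rintro ⟨n, rfl⟩; exact ⟨n - m, by rw [show m + (n - m) = 0 + n from by ring]⟩
    exact congrArg closure hr
  · intro n hn
    simp only [actZ_coe, Prod.mk.injEq, WithTop.coe_eq_coe] at hn
    have : n = 0 := by omega
    simp [this]

lemma mem_of_isOpen_top {V : Set (WithTop ℤ)} (hV : IsOpen V) (h : (⊤ : WithTop ℤ) ∈ V) :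
    ∃ m : ℤ, (↑m : WithTop ℤ) ∈ V := by
  have := (nhds_top_basis (α := WithTop ℤ)).mem_iff.mp (hV.mem_nhds h)
  obtain ⟨a, ha, hsub⟩ := this
  lift a to ℤ using ha.ne
  exact ⟨a + 1, hsub (Set.mem_Ioi.mpr (by exact_mod_cast lt_add_one a))⟩


/-- For Hausdorff `Y`: every open subset `S` of `Q` can be written as `S = ι(U) ∪ ĵ(W)` with
`U ⊆ Y` open, `W ⊆ R` open, and `U` nonempty whenever `W` is nonempty. -/
theorem open_sets_of_Q {Y : Type*} [TopologicalSpace Y] [T2Space Y] (σ : Y ≃ₜ Y)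
    (j : Quot (williams (fun (n : ℤ) (y : Y) => sigmaPow σ n y)) →
      Quot (williams (actZ σ)))
    (hj : ∀ (φ : Y) (z : Circle),
      j (Quot.mk _ (φ, z)) = Quot.mk _ (((⊤ : WithTop ℤ), φ), z)) :
    ∀ S : Set (Quot (williams (actZ σ))), IsOpen S →
      ∃ (U : Set Y) (W : Set (Quot (williams (fun (n : ℤ) (y : Y) => sigmaPow σ n y)))),
        IsOpen U ∧ IsOpen W ∧ S = iotaQ σ '' U ∪ j '' W ∧ (W.Nonempty → U.Nonempty) := by
  intro S hS
  refine ⟨iotaQ σ ⁻¹' S, j ⁻¹' S, ?_, ?_, ?_, ?_⟩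
  · have hcont : Continuous (iotaQ σ) :=
      (continuous_quot_mk).comp
        ((continuous_const.prodMk continuous_id).prodMk continuous_const)
    exact hS.preimage hcont
  · rw [isOpen_coinduced]
    have : (Quot.mk (williams (fun (n : ℤ) (y : Y) => sigmaPow σ n y))) ⁻¹' (j ⁻¹' S)
        = (fun p : Y × Circle => Quot.mk (williams (actZ σ)) (((⊤ : WithTop ℤ), p.1), p.2)) ⁻¹' S := by
      ext ⟨φ, z⟩
      simp [hj]
    rw [this]
    exact hS.preimage ((continuous_quot_mk).comp
      ((continuous_const.prodMk continuous_fst).prodMk continuous_snd))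
  · ext q
    constructor
    · intro hq
      obtain ⟨⟨⟨t, φ⟩, z⟩, rfl⟩ := Quot.exists_rep q
      cases t with
      | top =>
        right
        exact ⟨Quot.mk _ (φ, z), by simpa [hj] using hq, hj φ z⟩
      | coe m =>
        left
        rw [finite_class σ m φ z] at hq ⊢
        exact ⟨φ, hq, rfl⟩
    · rintro (⟨φ, hφ, rfl⟩ | ⟨w, hw, rfl⟩)
      · exact hφ
      · exact hw
  · rintro ⟨w, hw⟩
    obtain ⟨⟨φ, z⟩, rfl⟩ := Quot.exists_rep w
    have hmem : (((⊤ : WithTop ℤ), φ), z) ∈ Quot.mk (williams (actZ σ)) ⁻¹' S := by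
      simpa [hj] using hw
    have hopen : IsOpen (Quot.mk (williams (actZ σ)) ⁻¹' S) := hS.preimage continuous_quot_mk
    have hcont : Continuous (fun t : WithTop ℤ => ((t, φ), z)) :=
      (continuous_id.prodMk continuous_const).prodMk continuous_const
    obtain ⟨m, hm⟩ := mem_of_isOpen_top (hopen.preimage hcont) hmem
    refine ⟨φ, ?_⟩
    show iotaQ σ φ ∈ S
    rw [← finite_class σ m φ z]
    exact hm
end
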